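/- The commutator subgroup of the free group on two generators is not finitely generated. -/

import Mathlib

open SemidirectProduct Finsupp
open scoped commutatorElement

/-- Shift automorphism of `ℤ →₀ ℤ`. -/
noncomputable def shiftEquiv' (k : ℤ) : (ℤ →₀ ℤ) ≃+ (ℤ →₀ ℤ) :=
  Finsupp.domCongr (Equiv.addRight k)

lemma shiftEquiv'_apply (k : ℤ) (f : ℤ →₀ ℤ) (b : ℤ) :
    shiftEquiv' k f b = f (b - k) := by
  simp [shiftEquiv', Finsupp.domCongr_apply, Finsupp.equivMapDomain_apply,
    Equiv.addRight, sub_eq_add_neg]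

lemma shiftEquiv'_single (k m n : ℤ) :
    shiftEquiv' k (Finsupp.single m n) = Finsupp.single (m + k) n := by
  rw [shiftEquiv', Finsupp.domCongr_apply, Finsupp.equivMapDomain_single]
  rfl

/-- The action of `ℤ` on `ℤ →₀ ℤ` by shifting, as a homomorphism into
`MulAut` of the multiplicative version. -/
noncomputable def shiftAct : Multiplicative ℤ →* MulAut (Multiplicative (ℤ →₀ ℤ)) where
  toFun k := AddEquiv.toMultiplicative (shiftEquiv' k.toAdd)
  map_one' := by
    ext1 f
    apply Multiplicative.toAdd.injective
    ext b
    simp [shiftEquiv'_apply]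
  map_mul' a b := by
    ext1 f
    apply Multiplicative.toAdd.injective
    ext c
    simp [shiftEquiv'_apply, sub_sub]

/-- The wreath-like group `(ℤ →₀ ℤ) ⋊ ℤ`. -/
noncomputable abbrev WrG := Multiplicative (ℤ →₀ ℤ) ⋊[shiftAct] Multiplicative ℤ

/-- The subgroup of elements with trivial right component and left component
supported in a fixed finite set. -/
noncomputable def boundedSupp (T : Finset ℤ) : Subgroup WrG where
  carrier := {x | x.right = 1 ∧ ↑(x.left.toAdd.support) ⊆ (T : Set ℤ)}
  one_mem' := by simp
  mul_mem' := by
    rintro x y ⟨hx1, hx2⟩ ⟨hy1, hy2⟩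
    constructor
    · simp [hx1, hy1]
    · have : (x * y).left = x.left * y.left := by
        simp [SemidirectProduct.mul_left, hx1]
      rw [this]
      refine Set.Subset.trans ?_ (Set.union_subset hx2 hy2)
      intro a ha
      have := Finsupp.support_add (g₁ := x.left.toAdd) (g₂ := y.left.toAdd)
      have ha' : a ∈ x.left.toAdd.support ∪ y.left.toAdd.support := this (by exact_mod_cast ha)
      simpa using ha'
  inv_mem' := by
    rintro x ⟨hx1, hx2⟩
    constructor
    · simp [hx1]
    · have : x⁻¹.left = x.left⁻¹ := by
        simp [SemidirectProduct.inv_left, hx1]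
      rw [this]
      simpa using hx2

lemma subgroup_fg_map {G G' : Type*} [Group G] [Group G'] {P : Subgroup G}
    (h : P.FG) (f : G →* G') : (P.map f).FG := by
  classical
  obtain ⟨S, hS⟩ := h
  exact ⟨S.image f, by rw [Finset.coe_image, ← MonoidHom.map_closure, hS]⟩

/-- The commutator subgroup of the free group on two generators is not
finitely generated. -/
theorem commutator_freeGroup_two_not_fg :
    ¬ (commutator (FreeGroup (Fin 2))).FG := by
  intro hFG
  classical
  set a : WrG := inl (Multiplicative.ofAdd (Finsupp.single (0 : ℤ) (1 : ℤ))) with ha_def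
  set f : Fin 2 → WrG := ![a, inr (Multiplicative.ofAdd (1 : ℤ))] with hf_def
  set φ : FreeGroup (Fin 2) →* WrG := FreeGroup.lift f with hφ_def
  set K : Subgroup WrG := Subgroup.map φ (commutator (FreeGroup (Fin 2))) with hK_def
  have hKfg : K.FG := subgroup_fg_map hFG φ
  obtain ⟨S, hS⟩ := hKfg
  -- K is contained in the kernel of rightHom
  have hker : K ≤ MonoidHom.ker (rightHom : WrG →* Multiplicative ℤ) := by
    rintro x ⟨y, hy, rfl⟩
    have := Abelianization.commutator_subset_ker (rightHom.comp φ) hy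
    simpa [MonoidHom.mem_ker] using this
  set T : Finset ℤ := S.sup (fun s => s.left.toAdd.support) with hT_def
  have hSsub : (S : Set WrG) ⊆ (boundedSupp T : Set WrG) := by
    intro s hs
    have hsK : s ∈ K := by rw [← hS]; exact Subgroup.subset_closure hs
    refine ⟨?_, ?_⟩
    · have := hker hsK
      simpa [MonoidHom.mem_ker, rightHom_eq_right] using this
    · exact_mod_cast Finset.le_sup (f := fun s : WrG => s.left.toAdd.support) hs
  have hcl : K ≤ boundedSupp T := by
    rw [← hS]; exact (Subgroup.closure_le _).2 hSsub
  -- pick k outside T and nonzero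
  obtain ⟨k, hk⟩ := (T ∪ {0}).exists_notMem
  have hk0 : k ≠ 0 := fun h => hk (by simp [h])
  have hkT : k ∉ T := fun h => hk (Finset.mem_union_left _ h)
  -- the commutator element
  set t : WrG := inr (Multiplicative.ofAdd k) with ht_def
  have hcK : ⁅t, a⁆ ∈ K := by
    have hKr : K = ⁅φ.range, φ.range⁆ := by
      rw [hK_def, commutator_def, Subgroup.map_commutator]
      rw [← MonoidHom.range_eq_map]
    have h1 : a ∈ φ.range := MonoidHom.mem_range.mpr ⟨FreeGroup.of 0, by simp [hφ_def, hf_def]⟩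
    have h2 : t ∈ φ.range := by
      have heq : t = (inr (Multiplicative.ofAdd (1 : ℤ)) : WrG) ^ k := by
        rw [← map_zpow]
        simp [ht_def, ← ofAdd_zsmul]
      rw [heq]
      exact zpow_mem (MonoidHom.mem_range.mpr ⟨FreeGroup.of 1, by simp [hφ_def, hf_def]⟩) k
    rw [hKr]
    exact Subgroup.commutator_mem_commutator h2 h1
  have hmem := hcl hcK
  -- compute the commutator
  have hcomm : ⁅t, a⁆ = inl (shiftAct (Multiplicative.ofAdd k)
      (Multiplicative.ofAdd (Finsupp.single (0 : ℤ) (1 : ℤ))) *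
      (Multiplicative.ofAdd (Finsupp.single (0 : ℤ) (1 : ℤ)))⁻¹) := by
    rw [commutatorElement_def, map_mul, inl_aut, ha_def, ht_def]
    simp [mul_assoc]
  have hleft : (⁅t, a⁆).left.toAdd = Finsupp.single k 1 - Finsupp.single 0 1 := by
    rw [hcomm]
    show ((shiftAct (Multiplicative.ofAdd k)
      (Multiplicative.ofAdd (Finsupp.single (0 : ℤ) (1 : ℤ))) *
      (Multiplicative.ofAdd (Finsupp.single (0 : ℤ) (1 : ℤ)))⁻¹ :
        Multiplicative (ℤ →₀ ℤ))).toAdd = _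
    have : shiftAct (Multiplicative.ofAdd k)
        (Multiplicative.ofAdd (Finsupp.single (0 : ℤ) (1 : ℤ)))
        = Multiplicative.ofAdd (Finsupp.single k (1 : ℤ)) := by
      show Multiplicative.ofAdd (shiftEquiv' k (Finsupp.single (0:ℤ) (1:ℤ))) = _
      rw [shiftEquiv'_single]
      norm_num
    rw [this]
    simp [sub_eq_add_neg]
  -- conclude
  have hsupp : ↑((⁅t, a⁆).left.toAdd.support) ⊆ (T : Set ℤ) := hmem.2
  have hkmem : k ∈ (⁅t, a⁆).left.toAdd.support := by
    rw [hleft, Finsupp.mem_support_iff, Finsupp.sub_apply, Finsupp.single_eq_same,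
      Finsupp.single_eq_of_ne hk0]
    norm_num
  exact hkT (hsupp hkmem)
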